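/- Fourier transform of the Hamming variety surface measure: let j ∈ F*, μ_j the uniform probability measure on H_j = {x ∈ F^d : ∏ x_k = j}, and for m ∈ F^d let ℓ_m be the number of zero coordinates of m. If 1 ≤ ℓ_m ≤ d, then μ̂_j(m) = (−1)^{d−ℓ_m} (|F|−1)^{−(d−ℓ_m)}. -/

import Mathlib

open Finset

private lemma addChar_map_sum {A M : Type*} [AddCommMonoid A] [CommMonoid M]
    (χ : AddChar A M) {ι : Type*} (s : Finset ι) (f : ι → A) :
    χ (∑ i ∈ s, f i) = ∏ i ∈ s, χ (f i) := by
  classical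
  induction s using Finset.induction_on with
  | empty => simp
  | insert a s h ih => simp [Finset.sum_insert h, Finset.prod_insert h,
      AddChar.map_add_eq_mul, ih]

/-- Fourier transform of the surface measure on the Hamming variety
`H_j = {x ∈ F^d : ∏ x_k = j}` (`j ≠ 0`): if `ℓ_m ≥ 1` is the number of zero
coordinates of `m`, then `μ̂_j(m) = (−1)^{d−ℓ_m} (|F|−1)^{−(d−ℓ_m)}`. -/
theorem hamming_fourier (F : Type*) [Field F] [Fintype F] [DecidableEq F]
    (d : ℕ) (hd : 1 ≤ d) (χ : AddChar F ℂ) (hχ : χ ≠ 1) (j : F) (hj : j ≠ 0)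
    (m : Fin d → F) (hm : 1 ≤ (univ.filter (fun k => m k = 0)).card) :
    ((univ.filter (fun x : Fin d → F => ∏ k, x k = j)).card : ℂ)⁻¹ *
        ∑ x ∈ univ.filter (fun x : Fin d → F => ∏ k, x k = j),
          χ (-(∑ i, m i * x i)) =
      (-1 : ℂ) ^ (d - (univ.filter (fun k => m k = 0)).card) *
        (((Fintype.card F : ℂ) - 1) ^ (d - (univ.filter (fun k => m k = 0)).card))⁻¹ := by
  classical
  obtain ⟨k0, hk0mem⟩ := Finset.card_pos.mp (lt_of_lt_of_le one_pos hm)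
  have hk0 : m k0 = 0 := (Finset.mem_filter.mp hk0mem).2
  set q := Fintype.card F with hq
  have hq2 : 2 ≤ q := Fintype.one_lt_card
  have hq1le : (1:ℕ) ≤ q := le_trans one_le_two hq2
  have hq1 : (q : ℂ) - 1 ≠ 0 :=
    sub_ne_zero.mpr (by exact_mod_cast (by omega : q ≠ 1))
  set ℓ := (univ.filter (fun k => m k = 0)).card with hℓ
  have hℓd : ℓ ≤ d := by
    have := Finset.card_filter_le (univ : Finset (Fin d)) (fun k => m k = 0)
    simpa using this
  -- subtype of indices other than k0
  let K := {k : Fin d // k ≠ k0}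
  let S : Finset (Fin d → F) := univ.filter (fun x => ∏ k, x k = j)
  let T : Finset (K → F) := Fintype.piFinset (fun _ => univ.filter (· ≠ (0:F)))
  have prod_erase_eq : ∀ x : Fin d → F,
      ∏ k ∈ univ.erase k0, x k = ∏ k : K, x k.1 := by
    intro x
    exact Finset.prod_subtype _ (by intro k; simp [Finset.mem_erase]) _
  have sum_erase_eq : ∀ x : Fin d → F,
      ∑ k ∈ univ.erase k0, m k * x k = ∑ k : K, m k.1 * x k.1 := by
    intro x
    exact Finset.sum_subtype _ (by intro k; simp [Finset.mem_erase]) _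
  let fwd : (Fin d → F) → (K → F) := fun x k => x k.1
  let bwd : (K → F) → (Fin d → F) := fun y k =>
    if h : k = k0 then j * (∏ k' : K, y k')⁻¹ else y ⟨k, h⟩
  have hSne : ∀ x ∈ S, ∀ k, x k ≠ 0 := by
    intro x hx k
    have hx' : ∏ k, x k = j := (Finset.mem_filter.mp hx).2
    have : ∏ k, x k ≠ 0 := hx' ▸ hj
    exact (Finset.prod_ne_zero_iff.mp this) k (Finset.mem_univ k)
  have hTne : ∀ y ∈ T, ∀ k : K, y k ≠ 0 := by
    intro y hy k
    have := (Fintype.mem_piFinset.mp hy) k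
    simpa using this
  have hfwdT : ∀ x ∈ S, fwd x ∈ T := by
    intro x hx
    rw [Fintype.mem_piFinset]
    intro k
    simp [fwd, hSne x hx k.1]
  have bwd_prod : ∀ y : K → F, ∏ k ∈ univ.erase k0, bwd y k = ∏ k' : K, y k' := by
    intro y
    rw [prod_erase_eq (bwd y)]
    refine Finset.prod_congr rfl ?_
    intro k _
    simp [bwd, k.2]
  have hbwdS : ∀ y ∈ T, bwd y ∈ S := by
    intro y hy
    have hP : ∏ k' : K, y k' ≠ 0 :=
      Finset.prod_ne_zero_iff.mpr (fun k _ => hTne y hy k)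
    rw [Finset.mem_filter]
    refine ⟨Finset.mem_univ _, ?_⟩
    rw [← Finset.mul_prod_erase univ (bwd y) (Finset.mem_univ k0), bwd_prod y]
    simp only [bwd, dif_pos rfl]
    field_simp
  have hleft : ∀ x ∈ S, bwd (fwd x) = x := by
    intro x hx
    have hx' : ∏ k, x k = j := (Finset.mem_filter.mp hx).2
    funext k
    by_cases h : k = k0
    · subst h
      simp only [bwd, dif_pos rfl]
      have hP : ∏ k' : K, fwd x k' ≠ 0 :=
        Finset.prod_ne_zero_iff.mpr (fun k' _ => hSne x hx k'.1)
      have hsplit : x k * ∏ k' ∈ univ.erase k, x k' = j := by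
        rw [Finset.mul_prod_erase univ x (Finset.mem_univ k)]; exact hx'
      rw [prod_erase_eq x] at hsplit
      have he : ∏ k' : K, fwd x k' = ∏ k' : K, x k'.1 := rfl
      have hP' : ∏ k' : K, x k'.1 ≠ 0 :=
        Finset.prod_ne_zero_iff.mpr (fun k' _ => hSne x hx k'.1)
      rw [he, eq_comm, eq_mul_inv_iff_mul_eq₀ hP']
      exact hsplit
    · simp [bwd, h, fwd]
  have hright : ∀ y ∈ T, fwd (bwd y) = y := by
    intro y hy
    funext k
    simp [fwd, bwd, k.2]
  -- cardinalities
  have hcardK : Fintype.card K = d - 1 := by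
    simp [K, Fintype.card_subtype, Finset.filter_ne', Finset.card_erase_of_mem]
  have hcard0 : (univ.filter (· ≠ (0:F))).card = q - 1 := by
    rw [Finset.filter_ne', Finset.card_erase_of_mem (Finset.mem_univ _)]
    simp [hq]
  have hcardT : T.card = (q - 1) ^ (d - 1) := by
    rw [Fintype.card_piFinset]
    simp [hcard0, hcardK]
  have hcardS : S.card = (q - 1) ^ (d - 1) := by
    rw [Finset.card_nbij' fwd bwd hfwdT hbwdS hleft hright]
    exact hcardT
  -- the character sum factorizes
  have hsum : ∑ x ∈ S, χ (-(∑ i, m i * x i)) =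
      ∏ k : K, ∑ t ∈ univ.filter (· ≠ (0:F)), χ (-(m k.1 * t)) := by
    rw [Finset.prod_univ_sum]
    refine Finset.sum_nbij' fwd bwd hfwdT hbwdS hleft hright ?_
    intro x hx
    have h1 : ∑ i, m i * x i = ∑ k : K, m k.1 * x k.1 := by
      rw [← Finset.add_sum_erase univ (fun i => m i * x i) (Finset.mem_univ k0)]
      simp only [hk0, zero_mul, zero_add]
      exact sum_erase_eq x
    have h2 : -(∑ k : K, m k.1 * x k.1) = ∑ k : K, -(m k.1 * x k.1) := by
      rw [Finset.sum_neg_distrib]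
    rw [h1, h2, addChar_map_sum]
  -- evaluate each factor
  have hfac : ∀ k : K, (∑ t ∈ univ.filter (· ≠ (0:F)), χ (-(m k.1 * t))) =
      if m k.1 = 0 then ((q : ℂ) - 1) else -1 := by
    intro k
    by_cases h : m k.1 = 0
    · rw [if_pos h]
      have : ∀ t ∈ univ.filter (· ≠ (0:F)), χ (-(m k.1 * t)) = 1 := by
        intro t _; simp [h]
      rw [Finset.sum_congr rfl this, Finset.sum_const, hcard0, nsmul_eq_mul,
        mul_one, Nat.cast_sub hq1le, Nat.cast_one]
    · rw [if_neg h]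
      have hzero : ∑ t : F, χ (-(m k.1 * t)) = 0 := by
        have := AddChar.sum_eq_zero_of_ne_one hχ
        rw [← this]
        apply Fintype.sum_equiv (Equiv.mulLeft₀ (-(m k.1)) (neg_ne_zero.mpr h))
        intro t
        simp [Equiv.mulLeft₀, neg_mul]
      have hsplit : ∑ t : F, χ (-(m k.1 * t)) =
          χ (-(m k.1 * 0)) + ∑ t ∈ univ.erase 0, χ (-(m k.1 * t)) :=
        (Finset.add_sum_erase univ (fun t => χ (-(m k.1 * t)))
          (Finset.mem_univ (0:F))).symm
      rw [Finset.filter_ne']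
      have : ∑ t ∈ univ.erase (0:F), χ (-(m k.1 * t)) = -1 := by
        have h0 : χ (-(m k.1 * 0)) = 1 := by simp
        rw [hzero, h0] at hsplit
        linear_combination -hsplit
      exact this
  -- count zero / nonzero coordinates in K
  have hKprod : (∏ k : K, (if m k.1 = 0 then ((q:ℂ) - 1) else -1)) =
      ((q:ℂ) - 1) ^ (ℓ - 1) * (-1) ^ (d - ℓ) := by
    rw [← Finset.prod_subtype (univ.erase k0) (by intro k; simp [Finset.mem_erase])
      (fun k => if m k = 0 then ((q:ℂ) - 1) else -1)]
    rw [Finset.prod_ite (fun _ => ((q:ℂ)-1)) (fun _ => (-1:ℂ)),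
      Finset.prod_const, Finset.prod_const]
    congr 1
    · congr 1
      rw [Finset.filter_erase, Finset.card_erase_of_mem hk0mem]
    · congr 1
      have h1 : k0 ∉ univ.filter (fun k => ¬ m k = 0) := by simp [hk0]
      rw [Finset.filter_erase, Finset.erase_eq_of_notMem h1]
      have := Finset.card_filter_add_card_filter_not
        (s := (univ : Finset (Fin d))) (p := fun k => m k = 0)
      simp only [Finset.card_univ, Fintype.card_fin] at this
      omega
  -- put everything together
  have hcast : ((S.card : ℂ)) = ((q:ℂ) - 1) ^ (d - 1) := by
    rw [hcardS]
    push_cast [Nat.cast_sub hq1le]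
    ring
  show ((S.card : ℂ))⁻¹ * (∑ x ∈ S, χ (-(∑ i, m i * x i))) = _
  rw [hsum, Finset.prod_congr rfl (fun k _ => hfac k), hKprod, hcast]
  have hdsplit : d - 1 = (ℓ - 1) + (d - ℓ) := by omega
  rw [hdsplit, pow_add, mul_inv]
  have hne1 : ((q:ℂ) - 1) ^ (ℓ - 1) ≠ 0 := pow_ne_zero _ hq1
  field_simp
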